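/- For the matrix algebra A = M(n,ℂ) with normalized trace ⟨X⟩ = (1/n)tr(X) and orthonormal basis {√n e_ij} of elementary matrices, the surface invariant A_{g,f}^{or} = Σ ⟨e_{i₁}e_{j₁}e_{i₁}*e_{j₁}* ⋯ e_{i_g}e_{j_g}e_{i_g}*e_{j_g}* · e_{h₁}e_{h₁}* ⋯ e_{h_{f-1}}e_{h_{f-1}}*⟩ (sum over basis indices, using the orthonormal basis elements √n e_ij) equals n^{2g + 2(f-1)} · 1 = n^{2g+2f-2}. -/

import Mathlib

open Matrix

section AuxSurface

private noncomputable def stdE {n : ℕ} (i j : Fin n) : Matrix (Fin n) (Fin n) ℂ :=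
  Matrix.single i j 1

private lemma stdE_conjT {n : ℕ} (i j : Fin n) : (stdE i j)ᴴ = stdE j i := by
  ext a b
  simp [stdE, conjTranspose_apply, single_apply, and_comm, apply_ite (star : ℂ → ℂ)]

private lemma stdE_sum_diag {n : ℕ} : ∑ i : Fin n, stdE i i = (1 : Matrix (Fin n) (Fin n) ℂ) := by
  ext a b
  rw [Matrix.sum_apply]
  rw [Finset.sum_eq_single a (fun i _ hi => by simp [stdE, hi]) (by simp)]
  by_cases h : a = b <;> simp [stdE, h, Matrix.one_apply]

private lemma stdE_key {n : ℕ} (i j k l : Fin n) :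
    stdE i j * stdE k l * stdE j i * stdE l k =
      if i = j ∧ k = j ∧ l = j then stdE i i else 0 := by
  unfold stdE
  by_cases h1 : j = k
  · subst h1
    by_cases h2 : l = j
    · subst h2
      by_cases h3 : i = l
      · subst h3; simp
      · simp [h3, Matrix.single_mul_single_of_ne _ _ _ _ h3]
    · simp [h2, Ne.symm h2, Matrix.single_mul_single_of_ne _ _ _ _ h2]
  · simp [Ne.symm h1, Matrix.single_mul_single_of_ne _ _ _ _ h1,
      fun h : i = j ∧ k = j ∧ l = j => h1 (h.2.1.symm)]

private lemma stdE_key_sum {n : ℕ} :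
    ∑ p : Fin n × Fin n, ∑ q : Fin n × Fin n,
        stdE p.1 p.2 * stdE q.1 q.2 * stdE p.2 p.1 * stdE q.2 q.1
      = (1 : Matrix (Fin n) (Fin n) ℂ) := by
  simp only [Fintype.sum_prod_type]
  simp only [stdE_key]
  have h : ∀ i : Fin n, ∑ j : Fin n, ∑ k : Fin n, ∑ l : Fin n,
      (if i = j ∧ k = j ∧ l = j then stdE i i else 0) = stdE i i := by
    intro i
    rw [Finset.sum_eq_single i ?_ (by simp)]
    · rw [Finset.sum_eq_single i ?_ (by simp)]
      · rw [Finset.sum_eq_single i ?_ (by simp)]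
        · simp
        · intro l _ hl; simp [hl]
      · intro k _ hk; simp [hk]
    · intro j _ hj; simp [Ne.symm hj]
  rw [Finset.sum_congr rfl fun i _ => h i, stdE_sum_diag]

private lemma aux_sum_prod_scalar {ι : Type*} [Fintype ι] {N : ℕ}
    (M : ι → Matrix (Fin N) (Fin N) ℂ) (s : ℂ) (hM : ∑ p, M p = s • 1) :
    ∀ m : ℕ, ∑ c : Fin m → ι, (List.ofFn fun i => M (c i)).prod
      = s ^ m • (1 : Matrix (Fin N) (Fin N) ℂ)
  | 0 => by
      simp
  | (m + 1) => by
      rw [← Equiv.sum_comp (Fin.consEquiv (fun _ : Fin (m+1) => ι))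
        (fun c => (List.ofFn fun i => M (c i)).prod)]
      rw [Fintype.sum_prod_type]
      have h : ∀ (a : ι) (c : Fin m → ι),
          (List.ofFn fun i => M ((Fin.consEquiv (fun _ : Fin (m+1) => ι)) (a, c) i)).prod
            = M a * (List.ofFn fun i => M (c i)).prod := by
        intro a c
        rw [List.ofFn_succ]
        simp [Fin.consEquiv, Fin.cons_zero, Fin.cons_succ]
      simp only [h]
      rw [Finset.sum_congr rfl fun a _ => (Finset.mul_sum _ _ _).symm]
      rw [aux_sum_prod_scalar M s hM m]
      rw [← Finset.sum_mul, hM, Matrix.smul_mul, Matrix.mul_smul, smul_smul, one_mul, pow_succ']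

end AuxSurface

set_option maxHeartbeats 1600000 in
/-- For `A = M(n,ℂ)` with normalized trace `τ(X) = (1/n) tr X` and
orthonormal basis `√n e_{ij}` of (scaled) elementary matrices, the surface invariant
`A_{g,f}^{or}` — the sum over all basis indices of the trace of the product of `g`
"commutator" factors `E E' E* E'*` and `f−1` "tadpole" factors `E E*` — equals
`n^{2g+2f-2}`. -/
theorem matrix_surface_invariant
    (n g f : ℕ) (hn : 0 < n) (hf : 1 ≤ f)
    (E : Fin n × Fin n → Matrix (Fin n) (Fin n) ℂ)
    (hE : ∀ p, E p = (Real.sqrt n : ℂ) • Matrix.single p.1 p.2 1)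
    (τ : Matrix (Fin n) (Fin n) ℂ → ℂ)
    (hτ : ∀ X, τ X = (1 / (n : ℂ)) * Matrix.trace X) :
    ∑ x : Fin g → Fin n × Fin n, ∑ y : Fin g → Fin n × Fin n,
      ∑ h : Fin (f - 1) → Fin n × Fin n,
        τ ((List.ofFn fun i => E (x i) * E (y i) * (E (x i))ᴴ * (E (y i))ᴴ).prod *
           (List.ofFn fun k => E (h k) * (E (h k))ᴴ).prod)
      = (n : ℂ) ^ (2 * g + 2 * f - 2) := by
  have hn' : (n : ℂ) ≠ 0 := Nat.cast_ne_zero.mpr hn.ne'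
  have hsq : ((Real.sqrt n : ℝ) : ℂ) * ((Real.sqrt n : ℝ) : ℂ) = (n : ℂ) := by
    rw [← Complex.ofReal_mul, Real.mul_self_sqrt (Nat.cast_nonneg n)]
    norm_num
  have hstar : ∀ p : Fin n × Fin n, (E p)ᴴ = ((Real.sqrt n : ℝ) : ℂ) • stdE p.2 p.1 := by
    intro p
    rw [hE, Matrix.conjTranspose_smul, Complex.star_def, Complex.conj_ofReal]
    exact congrArg _ (stdE_conjT p.1 p.2)
  have hEstd : ∀ p : Fin n × Fin n, E p = ((Real.sqrt n : ℝ) : ℂ) • stdE p.1 p.2 := fun p => hE p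
  -- tadpole sum
  have hMt : (∑ p : Fin n × Fin n, E p * (E p)ᴴ)
      = ((n : ℂ) ^ 2) • (1 : Matrix (Fin n) (Fin n) ℂ) := by
    have h1 : ∀ p : Fin n × Fin n, E p * (E p)ᴴ = (n : ℂ) • stdE p.1 p.1 := by
      intro p
      rw [hstar, hEstd, Matrix.smul_mul, Matrix.mul_smul, smul_smul, hsq]
      congr 1
      unfold stdE
      rw [Matrix.single_mul_single_same, one_mul]
    rw [Finset.sum_congr rfl fun p _ => h1 p, ← Finset.smul_sum]
    have h2 : (∑ p : Fin n × Fin n, stdE p.1 p.1) = (n : ℂ) • (1 : Matrix (Fin n) (Fin n) ℂ) := by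
      rw [Fintype.sum_prod_type]
      have : ∀ i : Fin n, ∑ _j : Fin n, stdE i i = (n : ℂ) • stdE i i := by
        intro i
        rw [Finset.sum_const, Finset.card_univ, Fintype.card_fin, ← Nat.cast_smul_eq_nsmul ℂ]
      rw [Finset.sum_congr rfl fun i _ => this i, ← Finset.smul_sum, stdE_sum_diag]
    rw [h2, smul_smul, sq]
  -- commutator sum
  have hMc : (∑ z : (Fin n × Fin n) × (Fin n × Fin n),
        E z.1 * E z.2 * (E z.1)ᴴ * (E z.2)ᴴ)
      = ((n : ℂ) ^ 2) • (1 : Matrix (Fin n) (Fin n) ℂ) := by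
    have h1 : ∀ z : (Fin n × Fin n) × (Fin n × Fin n),
        E z.1 * E z.2 * (E z.1)ᴴ * (E z.2)ᴴ
          = ((n : ℂ) ^ 2) • (stdE z.1.1 z.1.2 * stdE z.2.1 z.2.2 * stdE z.1.2 z.1.1 *
              stdE z.2.2 z.2.1) := by
      intro z
      rw [hstar z.1, hstar z.2, hEstd z.1, hEstd z.2]
      simp only [Matrix.smul_mul, Matrix.mul_smul, smul_smul]
      congr 1
      rw [sq, ← hsq]
      ring
    rw [Finset.sum_congr rfl fun z _ => h1 z, ← Finset.smul_sum]
    congr 1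
    rw [Fintype.sum_prod_type]
    exact stdE_key_sum
  -- sums of products
  have HT : (∑ h : Fin (f - 1) → Fin n × Fin n,
        (List.ofFn fun k => E (h k) * (E (h k))ᴴ).prod)
      = ((n : ℂ) ^ 2) ^ (f - 1) • (1 : Matrix (Fin n) (Fin n) ℂ) :=
    aux_sum_prod_scalar (fun p => E p * (E p)ᴴ) _ hMt (f - 1)
  have HCz := aux_sum_prod_scalar
    (fun z : (Fin n × Fin n) × (Fin n × Fin n) => E z.1 * E z.2 * (E z.1)ᴴ * (E z.2)ᴴ) _ hMc g
  have HC : (∑ x : Fin g → Fin n × Fin n, ∑ y : Fin g → Fin n × Fin n,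
        (List.ofFn fun i => E (x i) * E (y i) * (E (x i))ᴴ * (E (y i))ᴴ).prod)
      = ((n : ℂ) ^ 2) ^ g • (1 : Matrix (Fin n) (Fin n) ℂ) := by
    rw [← Fintype.sum_prod_type
      (fun w : (Fin g → Fin n × Fin n) × (Fin g → Fin n × Fin n) =>
        (List.ofFn fun i => E (w.1 i) * E (w.2 i) * (E (w.1 i))ᴴ * (E (w.2 i))ᴴ).prod)]
    rw [← Equiv.sum_comp (Equiv.arrowProdEquivProdArrow (Fin g) (fun _ => Fin n × Fin n) (fun _ => Fin n × Fin n))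
      (fun w : (Fin g → Fin n × Fin n) × (Fin g → Fin n × Fin n) =>
        (List.ofFn fun i => E (w.1 i) * E (w.2 i) * (E (w.1 i))ᴴ * (E (w.2 i))ᴴ).prod)]
    exact HCz
  -- assemble
  simp only [hτ]
  have step1 : ∀ P : Matrix (Fin n) (Fin n) ℂ,
      (∑ h : Fin (f - 1) → Fin n × Fin n,
        (1 / (n : ℂ)) * Matrix.trace (P * (List.ofFn fun k => E (h k) * (E (h k))ᴴ).prod))
      = (1 / (n : ℂ)) * (((n : ℂ) ^ 2) ^ (f - 1) * Matrix.trace P) := by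
    intro P
    rw [← Finset.mul_sum, ← Matrix.trace_sum, ← Finset.mul_sum, HT, Matrix.mul_smul, mul_one,
      Matrix.trace_smul, smul_eq_mul]
  simp only [step1]
  simp only [← Finset.mul_sum]
  simp only [← Matrix.trace_sum]
  rw [HC, Matrix.trace_smul, Matrix.trace_one, smul_eq_mul]
  rw [Fintype.card_fin]
  have hexp : 2 * g + 2 * f - 2 = 2 * g + 2 * (f - 1) := by omega
  rw [hexp]
  field_simp
  ring
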